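/- arXiv:1908.02633 — 2 statements merged into one kernel-verified Lean document; each statement's English description precedes it below -/
import Mathlib

section
/- Let P be a prop, C a symmetric monoidal category, and s a supply of P in C. Then: every identity morphism of C is an s-homomorphism; if f : c → d and g : d → e are s-homomorphisms, then f ≫ g is an s-homomorphism; and if f₁ : c₁ → d₁ and f₂ : c₂ → d₂ are s-homomorphisms, then f₁ ⊗ f₂ : c₁ ⊗ c₂ → d₁ ⊗ d₂ is an s-homomorphism. -/
open CategoryTheory MonoidalCategory

universe v u

/-- A prop: a strict symmetric monoidal category whose objects are the natural numbers,
with tensor product of objects given by addition and unit `0`. -/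
structure PROP where
  Hom : ℕ → ℕ → Type
  id : ∀ m, Hom m m
  comp : ∀ {m n p}, Hom m n → Hom n p → Hom m p
  id_comp : ∀ {m n} (f : Hom m n), comp (id m) f = f
  comp_id : ∀ {m n} (f : Hom m n), comp f (id n) = f
  assoc : ∀ {m n p q} (f : Hom m n) (g : Hom n p) (h : Hom p q),
    comp (comp f g) h = comp f (comp g h)
  add : ∀ {m₁ n₁ m₂ n₂}, Hom m₁ n₁ → Hom m₂ n₂ → Hom (m₁ + m₂) (n₁ + n₂)
  add_id : ∀ m n, add (id m) (id n) = id (m + n)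
  add_comp : ∀ {m₁ n₁ p₁ m₂ n₂ p₂} (f₁ : Hom m₁ n₁) (g₁ : Hom n₁ p₁)
    (f₂ : Hom m₂ n₂) (g₂ : Hom n₂ p₂),
    add (comp f₁ g₁) (comp f₂ g₂) = comp (add f₁ f₂) (add g₁ g₂)
  add_assoc : ∀ {m₁ n₁ m₂ n₂ m₃ n₃} (f₁ : Hom m₁ n₁) (f₂ : Hom m₂ n₂) (f₃ : Hom m₃ n₃),
    HEq (add (add f₁ f₂) f₃) (add f₁ (add f₂ f₃))
  add_zero : ∀ {m n} (f : Hom m n), add f (id 0) = f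
  zero_add : ∀ {m n} (f : Hom m n), HEq (add (id 0) f) f
  braid : ∀ m n, Hom (m + n) (n + m)
  braid_naturality : ∀ {m₁ n₁ m₂ n₂} (f : Hom m₁ n₁) (g : Hom m₂ n₂),
    comp (add f g) (braid n₁ n₂) = comp (braid m₁ m₂) (add g f)
  symmetry : ∀ m n, comp (braid m n) (braid n m) = id (m + n)
  hexagon : ∀ m n p,
    HEq (braid (m + n) p)
      (comp (cast (by rw [Nat.add_assoc, Nat.add_assoc] :
              Hom (m + (n + p)) (m + (p + n)) = Hom ((m + n) + p) ((m + p) + n))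
            (add (id m) (braid n p)))
        (add (braid m p) (id n)))

section

variable {C : Type u} [Category.{v} C] [MonoidalCategory C]

/-- The left-bracketed `m`-fold tensor power of an object. -/
def pow (c : C) : ℕ → C
  | 0 => 𝟙_ C
  | n + 1 => pow c n ⊗ c

/-- The `m`-fold tensor power of a morphism. -/
def powHom {c d : C} (f : c ⟶ d) : ∀ m, pow c m ⟶ pow d m
  | 0 => 𝟙 _
  | m + 1 => powHom f m ⊗ₘ f

/-- The canonical coherence isomorphism `c^⊗m ⊗ c^⊗n ≅ c^⊗(m+n)`. -/
def powAdd (c : C) : ∀ m n, pow c m ⊗ pow c n ≅ pow c (m + n)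
  | m, 0 => ρ_ (pow c m)
  | m, n + 1 => (α_ (pow c m) (pow c n) c).symm ≪≫ whiskerRightIso (powAdd c m n) c

variable [SymmetricCategory C]

/-- The canonical "middle four exchange" coherence isomorphism. -/
def exch (a b e f : C) : (a ⊗ b) ⊗ (e ⊗ f) ≅ (a ⊗ e) ⊗ (b ⊗ f) :=
  α_ a b (e ⊗ f) ≪≫
    whiskerLeftIso a ((α_ b e f).symm ≪≫ whiskerRightIso (β_ b e) f ≪≫ α_ e b f) ≪≫
      (α_ a e (b ⊗ f)).symm

/-- The canonical coherence isomorphism `σ : c^⊗m ⊗ d^⊗m ≅ (c ⊗ d)^⊗m`. -/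
def powMul (c d : C) : ∀ m, pow c m ⊗ pow d m ≅ pow (c ⊗ d) m
  | 0 => λ_ (𝟙_ C)
  | m + 1 => exch (pow c m) c (pow d m) d ≪≫ whiskerRightIso (powMul c d m) (c ⊗ d)

/-- The canonical coherence isomorphism `σ : I ≅ I^⊗m`. -/
def powUnit : ∀ m, (𝟙_ C) ≅ (pow (𝟙_ C : C) m)
  | 0 => Iso.refl _
  | m + 1 => powUnit m ≪≫ (ρ_ _).symm

end

/-- A supply of a prop `P` in a symmetric monoidal category `C`:
for each object `c` a strong symmetric monoidal functor `s_c : P ⥤ C` with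
`s_c m = c^⊗m`, whose structure isomorphisms are the canonical coherence isos
(fields `map_id`, `map_comp`, `map_add`, `map_braid`), and which is compatible with
the monoidal product and unit of `C` (fields `tensor` and `unit`). -/
structure Supply (P : PROP) (C : Type u) [Category.{v} C] [MonoidalCategory C]
    [SymmetricCategory C] where
  map : ∀ (c : C) {m n : ℕ}, P.Hom m n → (pow c m ⟶ pow c n)
  map_id : ∀ (c : C) (m : ℕ), map c (P.id m) = 𝟙 (pow c m)
  map_comp : ∀ (c : C) {m n p : ℕ} (μ : P.Hom m n) (ν : P.Hom n p),
    map c (P.comp μ ν) = map c μ ≫ map c ν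
  map_add : ∀ (c : C) {m₁ n₁ m₂ n₂ : ℕ} (μ : P.Hom m₁ n₁) (ν : P.Hom m₂ n₂),
    (powAdd c m₁ m₂).hom ≫ map c (P.add μ ν) = (map c μ ⊗ₘ map c ν) ≫ (powAdd c n₁ n₂).hom
  map_braid : ∀ (c : C) (m n : ℕ),
    map c (P.braid m n) =
      (powAdd c m n).inv ≫ (β_ (pow c m) (pow c n)).hom ≫ (powAdd c n m).hom
  tensor : ∀ (c d : C) {m n : ℕ} (μ : P.Hom m n),
    (map c μ ⊗ₘ map d μ) ≫ (powMul c d n).hom = (powMul c d m).hom ≫ map (c ⊗ d) μ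
  unit : ∀ {m n : ℕ} (μ : P.Hom m n),
    (powUnit m).hom ≫ map (𝟙_ C) μ = (powUnit n).hom

/-- `f : c ⟶ d` is an `s`-homomorphism. -/
def Supply.IsHomomorphism {P : PROP} {C : Type u} [Category.{v} C] [MonoidalCategory C]
    [SymmetricCategory C] (s : Supply P C) {c d : C} (f : c ⟶ d) : Prop :=
  ∀ {m n : ℕ} (μ : P.Hom m n), powHom f m ≫ s.map d μ = s.map c μ ≫ powHom f n

section Aux

variable {C : Type u} [Category.{v} C] [MonoidalCategory C]

lemma powHom_id (c : C) : ∀ m, powHom (𝟙 c) m = 𝟙 (pow c m)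
  | 0 => rfl
  | m + 1 => by simp [powHom, pow, powHom_id c m]

lemma powHom_comp {c d e : C} (f : c ⟶ d) (g : d ⟶ e) :
    ∀ m, powHom (f ≫ g) m = powHom f m ≫ powHom g m
  | 0 => by simp [powHom, pow]
  | m + 1 => by simp [powHom, pow, powHom_comp f g m, tensorHom_comp_tensorHom]

variable [SymmetricCategory C]

lemma exch_natural {a a' b b' e e' x x' : C} (f : a ⟶ a') (g : b ⟶ b')
    (h : e ⟶ e') (k : x ⟶ x') :
    ((f ⊗ₘ g) ⊗ₘ (h ⊗ₘ k)) ≫ (exch a' b' e' x').hom =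
      (exch a b e x).hom ≫ ((f ⊗ₘ h) ⊗ₘ (g ⊗ₘ k)) := by
  have he : ∀ (a b e x : C), (exch a b e x).hom = tensorμ a b e x := by
    intro a b e x
    simp [exch, tensorμ, MonoidalCategory.whiskerLeft_comp]
  rw [he, he, tensorμ_natural]

lemma powMul_natural {c₁ d₁ c₂ d₂ : C}
    (f₁ : c₁ ⟶ d₁) (f₂ : c₂ ⟶ d₂) :
    ∀ m, (powHom f₁ m ⊗ₘ powHom f₂ m) ≫ (powMul d₁ d₂ m).hom =
      (powMul c₁ c₂ m).hom ≫ powHom (f₁ ⊗ₘ f₂) m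
  | 0 => by
    simp only [powHom, powMul]; erw [id_tensorHom_id, Category.id_comp, Category.comp_id]
  | m + 1 => by
    simp only [powHom, pow, powMul, Iso.trans_hom, whiskerRightIso_hom]
    rw [← Category.assoc, exch_natural]
    simp only [Category.assoc]
    rw [← tensorHom_id, ← tensorHom_id ((powMul c₁ c₂ m).hom), tensorHom_comp_tensorHom, tensorHom_comp_tensorHom,
      powMul_natural f₁ f₂ m, Category.comp_id, Category.id_comp]

end Aux

/-- For any supply `s` of a prop `P` in `C`: identities are
`s`-homomorphisms, and `s`-homomorphisms are closed under composition and
under the monoidal product. -/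
theorem homomorphisms_monoidal_subcategory (P : PROP) {C : Type u} [Category.{v} C]
    [MonoidalCategory C] [SymmetricCategory C] (s : Supply P C) :
    (∀ c : C, s.IsHomomorphism (𝟙 c)) ∧
    (∀ {c d e : C} (f : c ⟶ d) (g : d ⟶ e),
      s.IsHomomorphism f → s.IsHomomorphism g → s.IsHomomorphism (f ≫ g)) ∧
    (∀ {c₁ d₁ c₂ d₂ : C} (f₁ : c₁ ⟶ d₁) (f₂ : c₂ ⟶ d₂),
      s.IsHomomorphism f₁ → s.IsHomomorphism f₂ → s.IsHomomorphism (f₁ ⊗ₘ f₂)) := by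
  refine ⟨?_, ?_, ?_⟩
  · intro c m n μ
    simp [powHom_id]
  · intro c d e f g hf hg m n μ
    simp only [powHom_comp, Category.assoc]
    rw [hg μ, ← Category.assoc, hf μ, Category.assoc]
  · intro c₁ d₁ c₂ d₂ f₁ f₂ h₁ h₂ m n μ
    rw [← cancel_epi (powMul c₁ c₂ m).hom, ← Category.assoc, ← powMul_natural, Category.assoc,
      ← s.tensor d₁ d₂ μ, ← Category.assoc, tensorHom_comp_tensorHom, h₁ μ, h₂ μ, ← tensorHom_comp_tensorHom, Category.assoc,
      powMul_natural, ← Category.assoc, s.tensor, Category.assoc]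
end

section
/- Let P be a prop, let s be a supply of P in a symmetric monoidal category C, let t be a supply of P in a symmetric monoidal category D, and let (F, φ) : C → D be a strong symmetric monoidal functor that preserves the supply. Then for all objects c, c' of C the monoidal structure isomorphism φ_{c,c'} : F(c) ⊗ F(c') → F(c ⊗ c') is a t-homomorphism, and the unit structure isomorphism φ : I_D → F(I_C) is a t-homomorphism. -/
open CategoryTheory MonoidalCategory

universe v u

section
variable {C : Type u} [Category.{v} C] [MonoidalCategory C]
  {D : Type*} [Category D] [MonoidalCategory D]

/-- The canonical isomorphism `(F c)^⊗m ≅ F (c^⊗m)` built from the structure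
isomorphisms of a strong monoidal functor `F`. -/
def powComparison (F : C ⥤ D) [F.Monoidal] (c : C) :
    ∀ m : ℕ, pow (F.obj c) m ≅ F.obj (pow c m)
  | 0 => Functor.Monoidal.εIso F
  | m + 1 => whiskerRightIso (powComparison F c m) (F.obj c) ≪≫
      Functor.Monoidal.μIso F (pow c m) c

end

/-- A strong symmetric monoidal functor `(F, φ) : C ⥤ D` preserves the supplies `s` and
`t` if `t_{F c}(μ) ≫ φ⁽ⁿ⁾_c = φ⁽ᵐ⁾_c ≫ F (s_c μ)` for all `c` and all `μ : m ⟶ n` in `P`,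
where `φ⁽ᵐ⁾_c : (F c)^⊗m ≅ F (c^⊗m)` is the canonical isomorphism built from the
structure isomorphisms of `F`. -/
def PreservesSupply {P : PROP} {C : Type u} [Category.{v} C] [MonoidalCategory C]
    [SymmetricCategory C] {D : Type*} [Category D] [MonoidalCategory D]
    [SymmetricCategory D] (s : Supply P C) (t : Supply P D)
    (F : C ⥤ D) [F.Braided] : Prop :=
  ∀ (c : C) {m n : ℕ} (μ : P.Hom m n),
    t.map (F.obj c) μ ≫ (powComparison F c n).hom =
      (powComparison F c m).hom ≫ F.map (s.map c μ)


section Aux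

open Functor.LaxMonoidal

variable {C : Type u} [Category.{v} C] [MonoidalCategory C] [SymmetricCategory C]
  {D : Type*} [Category D] [MonoidalCategory D] [SymmetricCategory D]
  (F : C ⥤ D) [F.Braided]

lemma exch_hom (a b e f : C) : (exch a b e f).hom = tensorμ a b e f := by
  simp [exch, tensorμ]

lemma mu_tensorμ (a b e f : C) :
    (μ F a b ⊗ₘ μ F e f) ≫ μ F (a ⊗ b) (e ⊗ f) ≫ F.map (tensorμ a b e f) =
      tensorμ (F.obj a) (F.obj b) (F.obj e) (F.obj f) ≫ (μ F a e ⊗ₘ μ F b f) ≫ μ F (a ⊗ e) (b ⊗ f) := by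
  calc (μ F a b ⊗ₘ μ F e f) ≫ μ F (a ⊗ b) (e ⊗ f) ≫ F.map (tensorμ a b e f)
      = ((F.obj a ⊗ F.obj b) ◁ μ F e f) ≫ (μ F a b ▷ F.obj (e ⊗ f)) ≫
          μ F (a ⊗ b) (e ⊗ f) ≫ F.map (α_ a b (e ⊗ f)).hom ≫
          F.map (a ◁ ((α_ b e f).inv ≫ (β_ b e).hom ▷ f ≫ (α_ e b f).hom)) ≫
          F.map (α_ a e (b ⊗ f)).inv := by
        rw [tensorHom_def', tensorμ]; simp only [Functor.map_comp, Category.assoc,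
          MonoidalCategory.whiskerLeft_comp]
    _ = ((F.obj a ⊗ F.obj b) ◁ μ F e f) ≫ (α_ (F.obj a) (F.obj b) (F.obj (e ⊗ f))).hom ≫
          (F.obj a ◁ μ F b (e ⊗ f)) ≫
          (F.obj a ◁ F.map ((α_ b e f).inv ≫ (β_ b e).hom ▷ f ≫ (α_ e b f).hom)) ≫
          μ F a (e ⊗ (b ⊗ f)) ≫ F.map (α_ a e (b ⊗ f)).inv := by
        rw [Functor.LaxMonoidal.associativity_assoc]
        simp only [← Functor.LaxMonoidal.μ_natural_right_assoc]
    _ = (α_ (F.obj a) (F.obj b) (F.obj e ⊗ F.obj f)).hom ≫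
          (F.obj a ◁ ((F.obj b ◁ μ F e f) ≫ μ F b (e ⊗ f) ≫
            F.map ((α_ b e f).inv ≫ (β_ b e).hom ▷ f ≫ (α_ e b f).hom))) ≫
          μ F a (e ⊗ (b ⊗ f)) ≫ F.map (α_ a e (b ⊗ f)).inv := by
        rw [associator_naturality_right_assoc]
        simp only [MonoidalCategory.whiskerLeft_comp, Category.assoc]
    _ = (α_ (F.obj a) (F.obj b) (F.obj e ⊗ F.obj f)).hom ≫
          (F.obj a ◁ ((α_ (F.obj b) (F.obj e) (F.obj f)).inv ≫
            ((β_ (F.obj b) (F.obj e)).hom ▷ F.obj f) ≫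
            (α_ (F.obj e) (F.obj b) (F.obj f)).hom ≫
            (F.obj e ◁ μ F b f) ≫ μ F e (b ⊗ f))) ≫
          μ F a (e ⊗ (b ⊗ f)) ≫ F.map (α_ a e (b ⊗ f)).inv := by
        congr 2
        simp only [Functor.map_comp]
        rw [Functor.LaxMonoidal.associativity_inv_assoc]
        rw [← Functor.LaxMonoidal.μ_natural_left_assoc]
        rw [← comp_whiskerRight_assoc, Functor.Braided.braided]
        simp [Functor.LaxMonoidal.associativity]
    _ = tensorμ (F.obj a) (F.obj b) (F.obj e) (F.obj f) ≫ (μ F a e ⊗ₘ μ F b f) ≫ μ F (a ⊗ e) (b ⊗ f) := by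
        simp only [MonoidalCategory.whiskerLeft_comp, Category.assoc, tensorμ, MonoidalCategory.tensorHom_def]
        rw [Functor.LaxMonoidal.associativity_inv]
        rw [associator_inv_naturality_right_assoc, whisker_exchange_assoc]

lemma powHom_eps : ∀ m : ℕ,
    powHom (ε F) m ≫ (powComparison F (𝟙_ C) m).hom =
      (powUnit m).inv ≫ ε F ≫ F.map (powUnit (C := C) m).hom
  | 0 => by
      simp [powHom, powComparison, powUnit, Functor.Monoidal.εIso]
      show 𝟙 (𝟙_ D) ≫ ε F = 𝟙 (𝟙_ D) ≫ ε F ≫ F.map (𝟙 (𝟙_ C))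
      rw [F.map_id, Category.comp_id]
  | m + 1 => by
      have h : F.obj (pow (𝟙_ C : C) m) ◁ ε F ≫ μ F (pow (𝟙_ C : C) m) (𝟙_ C) =
          (ρ_ (F.obj (pow (𝟙_ C : C) m))).hom ≫ F.map (ρ_ (pow (𝟙_ C : C) m)).inv := by
        rw [Functor.LaxMonoidal.right_unitality (F := F) (pow (𝟙_ C : C) m)]
        simp
      show (powHom (ε F) m ⊗ₘ ε F) ≫
          ((powComparison F (𝟙_ C) m).hom ▷ F.obj (𝟙_ C)) ≫ μ F (pow (𝟙_ C) m) (𝟙_ C) = _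
      rw [MonoidalCategory.tensorHom_def, Category.assoc, whisker_exchange_assoc, h,
        ← comp_whiskerRight_assoc, powHom_eps m]
      show _ = ((ρ_ (pow (𝟙_ D : D) m)).hom ≫ (powUnit m).inv) ≫ ε F ≫
          F.map ((powUnit (C := C) m).hom ≫ (ρ_ (pow (𝟙_ C : C) m)).inv)
      simp

lemma powHom_mu (c c' : C) : ∀ m : ℕ,
    powHom (μ F c c') m ≫ (powComparison F (c ⊗ c') m).hom =
      (powMul (F.obj c) (F.obj c') m).inv ≫
        ((powComparison F c m).hom ⊗ₘ (powComparison F c' m).hom) ≫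
          μ F (pow c m) (pow c' m) ≫ F.map (powMul c c' m).hom
  | 0 => by
      show 𝟙 (𝟙_ D) ≫ ε F =
        (λ_ (𝟙_ D)).inv ≫ (ε F ⊗ₘ ε F) ≫ μ F (𝟙_ C) (𝟙_ C) ≫ F.map (λ_ (𝟙_ C)).hom
      have h : F.obj (𝟙_ C : C) ◁ ε F ≫ μ F (𝟙_ C) (𝟙_ C) ≫ F.map (λ_ (𝟙_ C)).hom =
          (ρ_ (F.obj (𝟙_ C : C))).hom := by
        rw [unitors_equal (C := C), Functor.LaxMonoidal.right_unitality (F := F) (𝟙_ C)]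
      rw [Category.id_comp, MonoidalCategory.tensorHom_def]
      simp only [Category.assoc]
      rw [h, rightUnitor_naturality, ← unitors_equal, Iso.inv_hom_id_assoc]
  | m + 1 => by
      show (powHom (μ F c c') m ⊗ₘ μ F c c') ≫
          ((powComparison F (c ⊗ c') m).hom ▷ F.obj (c ⊗ c')) ≫
            μ F (pow (c ⊗ c') m) (c ⊗ c') = _
      calc (powHom (μ F c c') m ⊗ₘ μ F c c') ≫
            ((powComparison F (c ⊗ c') m).hom ▷ F.obj (c ⊗ c')) ≫
              μ F (pow (c ⊗ c') m) (c ⊗ c')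
          = ((powHom (μ F c c') m ≫ (powComparison F (c ⊗ c') m).hom) ⊗ₘ μ F c c') ≫
              μ F (pow (c ⊗ c') m) (c ⊗ c') := by
            rw [MonoidalCategory.tensorHom_def, Category.assoc, whisker_exchange_assoc,
              ← comp_whiskerRight_assoc, ← tensorHom_def_assoc]
        _ = (((powMul (F.obj c) (F.obj c') m).inv ≫
              ((powComparison F c m).hom ⊗ₘ (powComparison F c' m).hom) ≫
                μ F (pow c m) (pow c' m) ≫ F.map (powMul c c' m).hom) ⊗ₘ μ F c c') ≫
              μ F (pow (c ⊗ c') m) (c ⊗ c') := by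
            rw [powHom_mu c c' m]
        _ = ((powMul (F.obj c) (F.obj c') m).inv ▷ (F.obj c ⊗ F.obj c')) ≫
              ((((powComparison F c m).hom ⊗ₘ (powComparison F c' m).hom) ≫
                μ F (pow c m) (pow c' m)) ⊗ₘ μ F c c') ≫
              (F.map (powMul c c' m).hom ▷ F.obj (c ⊗ c')) ≫
              μ F (pow (c ⊗ c') m) (c ⊗ c') := by
            simp only [← Category.assoc]; congr 1
            rw [← tensorHom_id, ← tensorHom_id, tensorHom_comp_tensorHom, tensorHom_comp_tensorHom,
              Category.id_comp, Category.comp_id, Category.assoc]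
            simp only [Category.assoc]
        _ = ((powMul (F.obj c) (F.obj c') m).inv ▷ (F.obj c ⊗ F.obj c')) ≫
              ((((powComparison F c m).hom ⊗ₘ (powComparison F c' m).hom) ≫
                μ F (pow c m) (pow c' m)) ⊗ₘ μ F c c') ≫
              μ F (pow c m ⊗ pow c' m) (c ⊗ c') ≫
              F.map ((powMul c c' m).hom ▷ (c ⊗ c')) := by
            rw [Functor.LaxMonoidal.μ_natural_left]
        _ = ((powMul (F.obj c) (F.obj c') m).inv ▷ (F.obj c ⊗ F.obj c')) ≫
              (((powComparison F c m).hom ⊗ₘ (powComparison F c' m).hom) ⊗ₘ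
                (𝟙 (F.obj c) ⊗ₘ 𝟙 (F.obj c'))) ≫
              (μ F (pow c m) (pow c' m) ⊗ₘ μ F c c') ≫
              μ F (pow c m ⊗ pow c' m) (c ⊗ c') ≫
              F.map ((powMul c c' m).hom ▷ (c ⊗ c')) := by
            rw [tensorHom_comp_tensorHom_assoc, MonoidalCategory.id_tensorHom_id, Category.id_comp]
        _ = ((powMul (F.obj c) (F.obj c') m).inv ▷ (F.obj c ⊗ F.obj c')) ≫
              (exch (pow (F.obj c) m) (F.obj c) (pow (F.obj c') m) (F.obj c')).inv ≫
              (tensorμ (pow (F.obj c) m) (F.obj c) (pow (F.obj c') m) (F.obj c')) ≫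
              (((powComparison F c m).hom ⊗ₘ (powComparison F c' m).hom) ⊗ₘ
                (𝟙 (F.obj c) ⊗ₘ 𝟙 (F.obj c'))) ≫
              (μ F (pow c m) (pow c' m) ⊗ₘ μ F c c') ≫
              μ F (pow c m ⊗ pow c' m) (c ⊗ c') ≫
              F.map ((powMul c c' m).hom ▷ (c ⊗ c')) := by
            rw [← exch_hom, Iso.inv_hom_id_assoc]
        _ = ((powMul (F.obj c) (F.obj c') m).inv ▷ (F.obj c ⊗ F.obj c')) ≫
              (exch (pow (F.obj c) m) (F.obj c) (pow (F.obj c') m) (F.obj c')).inv ≫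
              (((powComparison F c m).hom ▷ F.obj c) ⊗ₘ
                ((powComparison F c' m).hom ▷ F.obj c')) ≫
              (tensorμ (F.obj (pow c m)) (F.obj c) (F.obj (pow c' m)) (F.obj c')) ≫
              (μ F (pow c m) (pow c' m) ⊗ₘ μ F c c') ≫
              μ F (pow c m ⊗ pow c' m) (c ⊗ c') ≫
              F.map ((powMul c c' m).hom ▷ (c ⊗ c')) := by
            rw [← tensorHom_id (powComparison F c m).hom (F.obj c),
              ← tensorHom_id (powComparison F c' m).hom (F.obj c'),
              tensorμ_natural_assoc]
        _ = ((powMul (F.obj c) (F.obj c') m).inv ▷ (F.obj c ⊗ F.obj c')) ≫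
              (exch (pow (F.obj c) m) (F.obj c) (pow (F.obj c') m) (F.obj c')).inv ≫
              (((powComparison F c m).hom ▷ F.obj c) ⊗ₘ
                ((powComparison F c' m).hom ▷ F.obj c')) ≫
              (μ F (pow c m) c ⊗ₘ μ F (pow c' m) c') ≫
              μ F (pow c m ⊗ c) (pow c' m ⊗ c') ≫
              F.map (tensorμ (pow c m) c (pow c' m) c') ≫
              F.map ((powMul c c' m).hom ▷ (c ⊗ c')) := by
            simp only [← Category.assoc]; congr 1; simp only [Category.assoc]
            rw [mu_tensorμ]
        _ = _ := by
            show _ = ((powMul (F.obj c) (F.obj c') m).inv ▷ (F.obj c ⊗ F.obj c') ≫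
                (exch (pow (F.obj c) m) (F.obj c) (pow (F.obj c') m) (F.obj c')).inv) ≫
              ((((powComparison F c m).hom ▷ F.obj c) ≫ μ F (pow c m) c) ⊗ₘ
                (((powComparison F c' m).hom ▷ F.obj c') ≫ μ F (pow c' m) c')) ≫
              μ F (pow c m ⊗ c) (pow c' m ⊗ c') ≫
              F.map ((exch (pow c m) c (pow c' m) c').hom ≫ (powMul c c' m).hom ▷ (c ⊗ c'))
            rw [← tensorHom_comp_tensorHom, exch_hom, Functor.map_comp]
            simp only [Category.assoc]

end Aux

/-- **Statement 12.** If a strong symmetric monoidal functor `(F, φ) : C ⥤ D` preserves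
the supplies `s` (of `P` in `C`) and `t` (of `P` in `D`), then all the structure
isomorphisms `φ_{c,c'} : F c ⊗ F c' ⟶ F (c ⊗ c')` and `φ : 𝟙_ D ⟶ F (𝟙_ C)` are
`t`-homomorphisms. -/
theorem strongators_are_homomorphisms {P : PROP} {C : Type u} [Category.{v} C]
    [MonoidalCategory C] [SymmetricCategory C] {D : Type*} [Category D]
    [MonoidalCategory D] [SymmetricCategory D] (s : Supply P C) (t : Supply P D)
    (F : C ⥤ D) [F.Braided] (hF : PreservesSupply s t F) :
    (∀ c c' : C, t.IsHomomorphism (Functor.LaxMonoidal.μ F c c')) ∧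
      t.IsHomomorphism (Functor.LaxMonoidal.ε F) := by
  open Functor.LaxMonoidal in
  constructor
  · intro c c' m n ν
    have h1 : t.map (F.obj (c ⊗ c')) ν =
        (powComparison F (c ⊗ c') m).hom ≫ F.map (s.map (c ⊗ c') ν) ≫
          (powComparison F (c ⊗ c') n).inv := by
      rw [← Category.assoc, ← hF (c ⊗ c') ν, Category.assoc, Iso.hom_inv_id,
        Category.comp_id]
    have h2 : ∀ (d : C), (powComparison F d m).hom ≫ F.map (s.map d ν) =
        t.map (F.obj d) ν ≫ (powComparison F d n).hom := fun d => (hF d ν).symm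
    have h3 : (powMul (F.obj c) (F.obj c') m).inv ≫
        (t.map (F.obj c) ν ⊗ₘ t.map (F.obj c') ν) =
        t.map (F.obj c ⊗ F.obj c') ν ≫ (powMul (F.obj c) (F.obj c') n).inv := by
      rw [Iso.inv_comp_eq, ← Category.assoc, ← t.tensor, Category.assoc,
        Iso.hom_inv_id, Category.comp_id]
    have h4 : powHom (μ F c c') n =
        ((powMul (F.obj c) (F.obj c') n).inv ≫
          ((powComparison F c n).hom ⊗ₘ (powComparison F c' n).hom) ≫
            μ F (pow c n) (pow c' n) ≫ F.map (powMul c c' n).hom) ≫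
              (powComparison F (c ⊗ c') n).inv := by
      rw [Iso.eq_comp_inv, powHom_mu F c c' n]
    rw [h1, ← Category.assoc, powHom_mu F c c' m]
    calc ((powMul (F.obj c) (F.obj c') m).inv ≫
            ((powComparison F c m).hom ⊗ₘ (powComparison F c' m).hom) ≫
              μ F (pow c m) (pow c' m) ≫ F.map (powMul c c' m).hom) ≫
          F.map (s.map (c ⊗ c') ν) ≫ (powComparison F (c ⊗ c') n).inv
        = (powMul (F.obj c) (F.obj c') m).inv ≫
            ((powComparison F c m).hom ⊗ₘ (powComparison F c' m).hom) ≫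
              μ F (pow c m) (pow c' m) ≫
                F.map ((s.map c ν ⊗ₘ s.map c' ν) ≫ (powMul c c' n).hom) ≫
                  (powComparison F (c ⊗ c') n).inv := by
          simp only [Category.assoc]
          conv_rhs => rw [s.tensor, Functor.map_comp]
          simp only [Category.assoc]
      _ = (powMul (F.obj c) (F.obj c') m).inv ≫
            (((powComparison F c m).hom ≫ F.map (s.map c ν)) ⊗ₘ
              ((powComparison F c' m).hom ≫ F.map (s.map c' ν))) ≫
              μ F (pow c n) (pow c' n) ≫ F.map (powMul c c' n).hom ≫
                (powComparison F (c ⊗ c') n).inv := by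
          rw [Functor.map_comp]
          simp only [Category.assoc]
          rw [← Functor.LaxMonoidal.μ_natural_assoc, ← tensorHom_comp_tensorHom_assoc]
      _ = (powMul (F.obj c) (F.obj c') m).inv ≫
            (t.map (F.obj c) ν ⊗ₘ t.map (F.obj c') ν) ≫
            (((powComparison F c n).hom) ⊗ₘ ((powComparison F c' n).hom)) ≫
              μ F (pow c n) (pow c' n) ≫ F.map (powMul c c' n).hom ≫
                (powComparison F (c ⊗ c') n).inv := by
          rw [h2, h2, ← tensorHom_comp_tensorHom_assoc]
      _ = t.map (F.obj c ⊗ F.obj c') ν ≫ powHom (μ F c c') n := by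
          rw [h4, ← Category.assoc, h3]
          simp only [Category.assoc]
  · intro m n ν
    have h1 : t.map (F.obj (𝟙_ C)) ν =
        (powComparison F (𝟙_ C) m).hom ≫ F.map (s.map (𝟙_ C) ν) ≫
          (powComparison F (𝟙_ C) n).inv := by
      rw [← Category.assoc, ← hF (𝟙_ C) ν, Category.assoc, Iso.hom_inv_id,
        Category.comp_id]
    have h4 : powHom (ε F) n = ((powUnit n).inv ≫ ε F ≫
        F.map (powUnit (C := C) n).hom) ≫ (powComparison F (𝟙_ C) n).inv := by
      rw [Iso.eq_comp_inv, powHom_eps F n]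
    have h5 : t.map (𝟙_ D) ν = (powUnit m).inv ≫ (powUnit n).hom := by
      rw [Iso.eq_inv_comp, t.unit]
    rw [h1, ← Category.assoc, powHom_eps F m, h5, h4]
    simp only [Category.assoc, Iso.hom_inv_id_assoc]
    rw [← Functor.map_comp_assoc, s.unit]
end
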